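/- In the Clifford algebra of the hyperbolic quadratic form Q on (Fin n → K) × (Fin n → K), the quadratic elements F^a * E_b satisfy the gl(n) commutation relations: (F^a * E_b) * (F^c * E_d) − (F^c * E_d) * (F^a * E_b) = δ_b^c • (F^a * E_d) − δ_d^a • (F^c * E_b), for all a, b, c, d ∈ Fin n. In particular, the linear span of the elements F^a * E_b is closed under the commutator. -/
import Mathlib

open CliffordAlgebra

/-- The quadratic elements `F a * E b` satisfy the `gl(n)` commutation relations, and
their span is closed under the commutator. -/
theorem gl_commutation_relations (K : Type*) [CommRing K] (n : ℕ)
    (Q : QuadraticForm K ((Fin n → K) × (Fin n → K)))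
    (hQ : ∀ v : (Fin n → K) × (Fin n → K), Q v = ∑ a, v.1 a * v.2 a)
    (E F : Fin n → CliffordAlgebra Q)
    (hE : ∀ a, E a = ι Q ((0 : Fin n → K), Pi.single a 1))
    (hF : ∀ a, F a = ι Q (Pi.single a 1, (0 : Fin n → K))) :
    (∀ a b c d : Fin n,
      (F a * E b) * (F c * E d) - (F c * E d) * (F a * E b)
        = (if b = c then (1 : K) else 0) • (F a * E d)
          - (if d = a then (1 : K) else 0) • (F c * E b)) ∧
    (∀ x ∈ Submodule.span K (Set.range fun p : Fin n × Fin n => F p.1 * E p.2),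
     ∀ y ∈ Submodule.span K (Set.range fun p : Fin n × Fin n => F p.1 * E p.2),
      x * y - y * x ∈ Submodule.span K (Set.range fun p : Fin n × Fin n => F p.1 * E p.2)) := by
  -- polar values
  have hpol : ∀ u v : (Fin n → K) × (Fin n → K),
      QuadraticMap.polar Q u v = Q (u + v) - Q u - Q v := fun u v => rfl
  have hEE : ∀ b d, E b * E d = - (E d * E b) := by
    intro b d
    rw [hE, hE]
    apply ι_mul_ι_comm_of_isOrtho
    rw [QuadraticMap.IsOrtho, hQ, hQ, hQ]
    simp
  have hFF : ∀ a c, F a * F c = - (F c * F a) := by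
    intro a c
    rw [hF, hF]
    apply ι_mul_ι_comm_of_isOrtho
    rw [QuadraticMap.IsOrtho, hQ, hQ, hQ]
    simp
  have hEF : ∀ b c, E b * F c =
      algebraMap K _ (if b = c then (1 : K) else 0) - F c * E b := by
    intro b c
    rw [hE, hF, ι_mul_ι_comm]
    congr 1
    rw [hpol, hQ, hQ, hQ]
    simp [Pi.single_apply, Finset.sum_ite_eq, eq_comm]
  have hc : ∀ (r : K) (x y : CliffordAlgebra Q),
      x * algebraMap K (CliffordAlgebra Q) r * y = r • (x * y) := by
    intro r x y
    rw [← Algebra.commutes r x, mul_assoc, ← Algebra.smul_def]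
  have key : ∀ a b c d : Fin n,
      (F a * E b) * (F c * E d) - (F c * E d) * (F a * E b)
        = (if b = c then (1 : K) else 0) • (F a * E d)
          - (if d = a then (1 : K) else 0) • (F c * E b) := by
    intro a b c d
    have h1 : (F a * E b) * (F c * E d)
        = (if b = c then (1 : K) else 0) • (F a * E d) - F a * F c * (E b * E d) := by
      calc (F a * E b) * (F c * E d) = F a * (E b * F c) * E d := by noncomm_ring
        _ = F a * (algebraMap K _ (if b = c then (1 : K) else 0) - F c * E b) * E d := by
            rw [hEF]
        _ = _ := by
            rw [mul_sub, sub_mul, ← mul_assoc, hc]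
            noncomm_ring
    have h2 : (F c * E d) * (F a * E b)
        = (if d = a then (1 : K) else 0) • (F c * E b) - F c * F a * (E d * E b) := by
      calc (F c * E d) * (F a * E b) = F c * (E d * F a) * E b := by noncomm_ring
        _ = F c * (algebraMap K _ (if d = a then (1 : K) else 0) - F a * E d) * E b := by
            rw [hEF]
        _ = _ := by
            rw [mul_sub, sub_mul, ← mul_assoc, hc]
            noncomm_ring
    have h3 : F a * F c * (E b * E d) = F c * F a * (E d * E b) := by
      rw [hFF, hEE, neg_mul_neg]
    rw [h1, h2, h3]
    abel
  refine ⟨key, ?_⟩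
  intro x hx y hy
  set S := Submodule.span K (Set.range fun p : Fin n × Fin n => F p.1 * E p.2) with hS
  have gen : ∀ p q : Fin n × Fin n,
      (F p.1 * E p.2) * (F q.1 * E q.2) - (F q.1 * E q.2) * (F p.1 * E p.2) ∈ S := by
    intro p q
    rw [key]
    exact sub_mem (Submodule.smul_mem _ _ (Submodule.subset_span ⟨(p.1, q.2), rfl⟩))
      (Submodule.smul_mem _ _ (Submodule.subset_span ⟨(q.1, p.2), rfl⟩))
  induction hx using Submodule.span_induction with
  | mem x hx' =>
    obtain ⟨p, rfl⟩ := hx'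
    induction hy using Submodule.span_induction with
    | mem y hy' => obtain ⟨q, rfl⟩ := hy'; exact gen p q
    | zero => simpa using S.zero_mem
    | add y z hy hz ihy ihz =>
        have : (F p.1 * E p.2) * (y + z) - (y + z) * (F p.1 * E p.2)
            = ((F p.1 * E p.2) * y - y * (F p.1 * E p.2))
              + ((F p.1 * E p.2) * z - z * (F p.1 * E p.2)) := by noncomm_ring
        rw [this]; exact add_mem ihy ihz
    | smul r y hy ihy =>
        have : (F p.1 * E p.2) * (r • y) - (r • y) * (F p.1 * E p.2)
            = r • ((F p.1 * E p.2) * y - y * (F p.1 * E p.2)) := by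
          rw [smul_sub, mul_smul_comm, smul_mul_assoc]
        rw [this]; exact S.smul_mem _ ihy
  | zero => simpa using S.zero_mem
  | add x z hx hz ihx ihz =>
      have : (x + z) * y - y * (x + z)
          = (x * y - y * x) + (z * y - y * z) := by noncomm_ring
      rw [this]; exact add_mem ihx ihz
  | smul r x hx ihx =>
      have : (r • x) * y - y * (r • x) = r • (x * y - y * x) := by
        rw [smul_sub, mul_smul_comm, smul_mul_assoc]
      rw [this]; exact S.smul_mem _ ihx
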